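/- (Expected number of escaping demands per capture, in the worst-case vehicle position.) Let λ > 0, v > 0, W > 0 and set α := λW/2. Then (λ²/(v³W²)) ∫₀^{vW} (yW − y²/(2v)) · y · e^{−λ y²/(2v²W)} dy + (λW/2) e^{−λW/2} = √(πα)·erf(√α) + e^{−α} − 1. -/

import Mathlib

/-- The error function `erf(x) = (2/√π) ∫₀ˣ e^{−t²} dt`. -/
noncomputable def erf (x : ℝ) : ℝ :=
  (2 / Real.sqrt Real.pi) * ∫ t in (0:ℝ)..x, Real.exp (-t ^ 2)

/-- Expected number of escaping demands per capture, in the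
worst-case vehicle position: with `α = λW/2`,
`(λ²/(v³W²)) ∫₀^{vW} (yW − y²/(2v)) y e^{−λy²/(2v²W)} dy + (λW/2)e^{−λW/2}
  = √(πα)·erf(√α) + e^{−α} − 1`. -/
theorem stmt11 (lam v W α : ℝ) (hlam : 0 < lam) (hv : 0 < v) (hW : 0 < W)
    (hα : α = lam * W / 2) :
    (lam ^ 2 / (v ^ 3 * W ^ 2)) *
        (∫ y in (0:ℝ)..(v * W),
          (y * W - y ^ 2 / (2 * v)) * y * Real.exp (-lam * y ^ 2 / (2 * v ^ 2 * W)))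
      + (lam * W / 2) * Real.exp (-(lam * W) / 2)
      = Real.sqrt (Real.pi * α) * erf (Real.sqrt α) + Real.exp (-α) - 1 := by
  set c : ℝ := lam / (2 * v ^ 2 * W) with hc
  have hc0 : 0 < c := by positivity
  set s : ℝ := Real.sqrt c with hs
  have hs0 : 0 < s := Real.sqrt_pos.mpr hc0
  have hs2 : s ^ 2 = c := Real.sq_sqrt hc0.le
  have hcont : Continuous fun t : ℝ => Real.exp (-t ^ 2) := by continuity
  have hint : ∀ b : ℝ, HasDerivAt (fun u => ∫ t in (0:ℝ)..u, Real.exp (-t ^ 2))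
      (Real.exp (-b ^ 2)) b := fun b =>
    intervalIntegral.integral_hasDerivAt_right (hcont.intervalIntegrable _ _)
      (hcont.stronglyMeasurableAtFilter _ _) hcont.continuousAt
  set F : ℝ → ℝ := fun y => -W * (y * Real.exp (-(c * y ^ 2))) / (2 * c)
      + (W / (2 * c * s)) * (∫ t in (0:ℝ)..(s * y), Real.exp (-t ^ 2))
      + (1 / (2 * v)) * ((y ^ 2 / (2 * c) + 1 / (2 * c ^ 2)) * Real.exp (-(c * y ^ 2)))
      with hF
  have hderiv : ∀ y : ℝ, HasDerivAt F
      ((y * W - y ^ 2 / (2 * v)) * y * Real.exp (-lam * y ^ 2 / (2 * v ^ 2 * W))) y := by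
    intro y
    have hE : HasDerivAt (fun y : ℝ => Real.exp (-(c * y ^ 2)))
        (Real.exp (-(c * y ^ 2)) * (-(c * (2 * y)))) y := by
      have h1 : HasDerivAt (fun y : ℝ => -(c * y ^ 2)) (-(c * (2 * y))) y := by
        simpa using ((hasDerivAt_pow 2 y).const_mul c).fun_neg
      simpa [mul_comm] using h1.exp
    have hG : HasDerivAt (fun y : ℝ => ∫ t in (0:ℝ)..(s * y), Real.exp (-t ^ 2))
        (Real.exp (-(s * y) ^ 2) * s) y := by
      have h2 : HasDerivAt (fun y : ℝ => s * y) s y := by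
        simpa using (hasDerivAt_id y).const_mul s
      exact (hint (s * y)).comp y h2
    have hp : HasDerivAt (fun y : ℝ => y ^ 2 / (2 * c) + 1 / (2 * c ^ 2))
        (2 * y / (2 * c)) y := by
      have := ((hasDerivAt_pow 2 y).div_const (2 * c)).add_const (1 / (2 * c ^ 2))
      convert this using 1
      all_goals norm_num
      all_goals rfl
    have hT1 : HasDerivAt (fun y : ℝ => -W * (y * Real.exp (-(c * y ^ 2))) / (2 * c))
        (-W * (1 * Real.exp (-(c * y ^ 2)) + y * (Real.exp (-(c * y ^ 2)) * (-(c * (2 * y))))) / (2 * c)) y :=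
      (((hasDerivAt_id y).mul hE).const_mul (-W)).div_const (2 * c)
    have hT2 := hG.const_mul (W / (2 * c * s))
    have hT3 := (hp.mul hE).const_mul (1 / (2 * v))
    have hmain := (hT1.add hT2).add hT3
    have hexp1 : -lam * y ^ 2 / (2 * v ^ 2 * W) = -(c * y ^ 2) := by rw [hc]; ring
    have hexp2 : (-(s * y) ^ 2) = -(c * y ^ 2) := by rw [← hs2]; ring
    have heq : (y * W - y ^ 2 / (2 * v)) * y * Real.exp (-lam * y ^ 2 / (2 * v ^ 2 * W))
        = -W * (1 * Real.exp (-(c * y ^ 2)) + y * (Real.exp (-(c * y ^ 2)) * (-(c * (2 * y))))) / (2 * c)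
          + (W / (2 * c * s)) * (Real.exp (-(s * y) ^ 2) * s)
          + (1 / (2 * v)) * (2 * y / (2 * c) * Real.exp (-(c * y ^ 2))
              + (y ^ 2 / (2 * c) + 1 / (2 * c ^ 2)) * (Real.exp (-(c * y ^ 2)) * (-(c * (2 * y))))) := by
      rw [hexp1, hexp2]
      field_simp
      ring
    rw [heq]
    exact hmain
  have hcontI : Continuous fun y : ℝ =>
      (y * W - y ^ 2 / (2 * v)) * y * Real.exp (-lam * y ^ 2 / (2 * v ^ 2 * W)) := by
    fun_prop
  have key : (∫ y in (0:ℝ)..(v * W),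
      (y * W - y ^ 2 / (2 * v)) * y * Real.exp (-lam * y ^ 2 / (2 * v ^ 2 * W)))
      = F (v * W) - F 0 :=
    intervalIntegral.integral_eq_sub_of_hasDerivAt (fun y _ => hderiv y)
      (hcontI.intervalIntegrable _ _)
  rw [key]
  have hca : c * (v * W) ^ 2 = α := by
    rw [hc, hα, div_mul_eq_mul_div, div_eq_div_iff (by positivity) (by norm_num)]
    ring
  have hsvW : s * (v * W) = Real.sqrt α := by
    rw [hs, ← Real.sqrt_sq (by positivity : (0 : ℝ) ≤ v * W),
      ← Real.sqrt_mul hc0.le, hca]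
  have hF0 : F 0 = (1 / (2 * v)) * ((1 / (2 * c ^ 2))) := by
    simp [hF]
  have hFvW : F (v * W) = -W * ((v * W) * Real.exp (-α)) / (2 * c)
      + (W / (2 * c * s)) * (∫ t in (0:ℝ)..(Real.sqrt α), Real.exp (-t ^ 2))
      + (1 / (2 * v)) * (((v * W) ^ 2 / (2 * c) + 1 / (2 * c ^ 2)) * Real.exp (-α)) := by
    rw [hF]; simp only [hsvW, hca]
  rw [hF0, hFvW, erf]
  set A := ∫ t in (0:ℝ)..(Real.sqrt α), Real.exp (-t ^ 2) with hA
  have hsqrtpa : Real.sqrt (Real.pi * α) * ((2 / Real.sqrt Real.pi) * A)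
      = 2 * (s * (v * W)) * A := by
    rw [hsvW, Real.sqrt_mul Real.pi_pos.le]
    have hπ : Real.sqrt Real.pi ≠ 0 := ne_of_gt (Real.sqrt_pos.mpr Real.pi_pos)
    field_simp
  rw [hsqrtpa]
  have hexp3 : Real.exp (-(lam * W) / 2) = Real.exp (-α) := by rw [hα]; ring_nf
  rw [hexp3]
  have hlam' : lam = 2 * s ^ 2 * v ^ 2 * W := by
    rw [hs2, hc]; field_simp
  rw [hlam', hα, hlam', show c = s ^ 2 from hs2.symm]
  field_simp
  ring
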